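/- Let X be a Hausdorff locally compact non-compact space and C ⊆ X compact and not open. Then Y = X \ C is not connected near infinity. -/

import Mathlib

open Set

/-- A space is connected near infinity if every relatively compact subset is
contained in a relatively compact subset with connected complement. -/
def ConnectedNearInfinity (Y : Type*) [TopologicalSpace Y] : Prop :=
  ∀ A : Set Y, IsCompact (closure A) →
    ∃ B : Set Y, A ⊆ B ∧ IsCompact (closure B) ∧ IsPreconnected Bᶜ

/-- If X is locally compact Hausdorff non-compact and C is compact not open,
then X \ C is not connected near infinity. -/
theorem stmt_4 {X : Type*} [TopologicalSpace X] [T2Space X] [LocallyCompactSpace X]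
    (hnc : ¬ CompactSpace X) (C : Set X) (hC : IsCompact C) (hCo : ¬ IsOpen C) :
    ¬ ConnectedNearInfinity (Cᶜ : Set X) := by
  intro h
  -- a boundary point of C approachable from the complement
  obtain ⟨x, hxC, hxcl⟩ : ∃ x, x ∈ C ∧ x ∈ closure Cᶜ := by
    by_contra hcon
    push_neg at hcon
    apply hCo
    have hsub : C ⊆ interior C := by
      intro y hy
      have hy' := hcon y hy
      rw [closure_compl] at hy'
      simpa using hy'
    have : C = interior C := le_antisymm hsub interior_subset
    rw [this]; exact isOpen_interior
  obtain ⟨K, hK, hCK⟩ := exists_compact_superset hC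
  set U := interior K with hU
  have hUopen : IsOpen U := isOpen_interior
  have hclU : IsCompact (closure U) :=
    hK.of_isClosed_subset isClosed_closure (closure_minimal interior_subset hK.isClosed)
  have hCU : C ⊆ U := hCK
  -- the "ring" F = closure U \ U is compact and inside Cᶜ
  set F : Set X := closure U \ U with hF
  have hFclosed : IsClosed F := isClosed_closure.sdiff hUopen
  have hFcompact : IsCompact F := hclU.of_isClosed_subset hFclosed diff_subset
  have hFC : F ⊆ Cᶜ := fun y hy hyC => hy.2 (hCU hyC)
  set A : Set (Cᶜ : Set X) := Subtype.val ⁻¹' F with hA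
  have hAclosed : IsClosed A := hFclosed.preimage continuous_subtype_val
  have himA : Subtype.val '' A = F := by
    rw [hA, Subtype.image_preimage_coe]
    exact inter_eq_right.mpr hFC
  have hAcl : IsCompact (closure A) := by
    rw [hAclosed.closure_eq, Topology.IsEmbedding.subtypeVal.isInducing.isCompact_iff, himA]
    exact hFcompact
  obtain ⟨B, hAB, hBcl, hBconn⟩ := h A hAcl
  set KB : Set X := Subtype.val '' (closure B) with hKB
  have hKBcompact : IsCompact KB := hBcl.image continuous_subtype_val
  have hKBclosed : IsClosed KB := hKBcompact.isClosed
  have hKBC : KB ⊆ Cᶜ := by rintro y ⟨b, _, rfl⟩; exact b.2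
  set S : Set X := Subtype.val '' (Bᶜ) with hS
  have hSconn : IsPreconnected S := hBconn.image _ continuous_subtype_val.continuousOn
  have hScover : S ⊆ U ∪ (closure U)ᶜ := by
    rintro y ⟨b, hb, rfl⟩
    by_contra hy
    rw [mem_union, not_or] at hy
    have hbF : (b : X) ∈ F := ⟨not_not.mp hy.2, hy.1⟩
    exact hb (hAB hbF)
  have hdisj : ¬ ((S ∩ U).Nonempty ∧ (S ∩ (closure U)ᶜ).Nonempty) := by
    rintro ⟨h1, h2⟩
    obtain ⟨z, _, hzU, hzc⟩ :=
      hSconn U (closure U)ᶜ hUopen isClosed_closure.isOpen_compl hScover h1 h2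
    exact hzc (subset_closure hzU)
  by_cases h1 : (S ∩ U).Nonempty
  · -- S stays inside closure U, so X is compact: contradiction
    have h2 : ¬ (S ∩ (closure U)ᶜ).Nonempty := fun h2 => hdisj ⟨h1, h2⟩
    have hSsub : S ⊆ closure U := by
      intro y hy
      by_contra hyc
      exact h2 ⟨y, hy, hyc⟩
    have hcover : (univ : Set X) ⊆ KB ∪ closure U := by
      intro y _
      by_cases hyC : y ∈ C
      · exact Or.inr (subset_closure (hCU hyC))
      · by_cases hyB : (⟨y, hyC⟩ : (Cᶜ : Set X)) ∈ B
        · exact Or.inl ⟨⟨y, hyC⟩, subset_closure hyB, rfl⟩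
        · exact Or.inr (hSsub ⟨⟨y, hyC⟩, hyB, rfl⟩)
    have : IsCompact (univ : Set X) :=
      (hKBcompact.union hclU).of_isClosed_subset isClosed_univ hcover
    exact hnc ⟨this⟩
  · -- all points of Cᶜ near x are in B, so x ∈ KB ⊆ Cᶜ: contradiction
    have hsub : U ∩ Cᶜ ⊆ KB := by
      rintro y ⟨hyU, hyC⟩
      by_cases hyB : (⟨y, hyC⟩ : (Cᶜ : Set X)) ∈ B
      · exact ⟨⟨y, hyC⟩, subset_closure hyB, rfl⟩
      · exact absurd ⟨y, ⟨⟨y, hyC⟩, hyB, rfl⟩, hyU⟩ h1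
    have hxcl' : x ∈ closure (U ∩ Cᶜ) := hUopen.inter_closure ⟨hCU hxC, hxcl⟩
    have : x ∈ KB := hKBclosed.closure_subset_iff.mpr hsub hxcl'
    exact hKBC this hxC
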